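/- Let M be a rank-r spike with tip t, and let P₁ = (R₁,B₁), P₂ = (R₂,B₂) be compatible pairs of disjoint bases with R₁ ∪ B₁ = S − t, where R₁ and R₂ are both non-transversal bases with R₁ ⊇ {x₁,y₁}, B₁ ⊇ {x_r,y_r}, R₂ ⊇ {x_r,y_r}, B₂ ⊇ {x₁,y₁}, and x_i has the same color in P₁ and P₂ for all 2 ≤ i ≤ r−1. If r ≥ 3 and all of x₂,…,x_{r−1} are red in P₁, and w(y₂) ≤ w(x₂), then the exchange sequence (x₁,y₂),(y₁,x_r),(y₂,y_r) is feasible, has length 3 ≤ r, and has total weight at most w(S − t). -/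

import Mathlib

open Set Matroid

variable {α : Type*}

/-- `C` is a circuit of `M`: a minimal dependent subset of the ground set. -/
def IsCircuitOf (M : Matroid α) (C : Set α) : Prop :=
  C ⊆ M.E ∧ ¬ M.Indep C ∧ ∀ D, D ⊂ C → M.Indep D

/-- `M` is a rank-`r` spike with tip `t`, legs `{x i, y i}` and extra circuit family
`C3`: the ground set is `{t, x 1, y 1, …, x r, y r}` (all elements distinct), and the
circuits of `M` are exactly the sets `{t, x i, y i}`, the sets `{x i, y i, x j, y j}` for
`i ≠ j`, the members of `C3` (which are transversals of the legs of size `r` avoiding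
`t`), and all `(r + 1)`-element subsets of the ground set containing none of these. -/
structure IsSpike (M : Matroid α) (r : ℕ) (t : α) (x y : Fin r → α)
    (C3 : Set (Set α)) : Prop where
  hr : 3 ≤ r
  inj : Function.Injective fun p : Fin r × Bool => if p.2 then x p.1 else y p.1
  htx : ∀ i, t ≠ x i
  hty : ∀ i, t ≠ y i
  ground : M.E = insert t (⋃ i, {x i, y i})
  hC3 : ∀ C ∈ C3, C ⊆ (⋃ i, {x i, y i}) ∧ C.ncard = r ∧
    ∀ i, (C ∩ {x i, y i}).ncard = 1
  circuits : ∀ C : Set α, IsCircuitOf M C ↔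
    (∃ i, C = {t, x i, y i}) ∨
    (∃ i j, i ≠ j ∧ C = ({x i, y i, x j, y j} : Set α)) ∨
    C ∈ C3 ∨
    (C ⊆ M.E ∧ C.ncard = r + 1 ∧
      (∀ i, ¬ ({t, x i, y i} : Set α) ⊆ C) ∧
      (∀ i j, i ≠ j → ¬ ({x i, y i, x j, y j} : Set α) ⊆ C) ∧
      ∀ C' ∈ C3, ¬ C' ⊆ C)

lemma exists_isCircuitOf {M : Matroid α} {Z : Set α} (hfin : Z.Finite) (hZE : Z ⊆ M.E)
    (hdep : ¬ M.Indep Z) : ∃ C, C ⊆ Z ∧ IsCircuitOf M C := by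
  have hfam : {C | C ⊆ Z ∧ ¬ M.Indep C}.Finite :=
    hfin.finite_subsets.subset fun C hC => hC.1
  obtain ⟨C, hC, hmin⟩ := hfam.exists_minimalFor id _ ⟨Z, Subset.rfl, hdep⟩
  refine ⟨C, hC.1, hC.1.trans hZE, hC.2, fun D hD => ?_⟩
  by_contra hDdep
  exact hD.2 (hmin ⟨hD.subset.trans hC.1, hDdep⟩ hD.subset)

lemma base_of_indep_ncard {M : Matroid α} {Z B : Set α} (hZ : M.Indep Z) (hB : M.IsBase B)
    (hBfin : B.Finite) (hcard : B.ncard ≤ Z.ncard) : M.IsBase Z := by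
  obtain ⟨B', hB', hZB'⟩ := hZ.exists_isBase_superset
  have hB'fin : B'.Finite := hB.finite_of_finite hBfin hB'
  have hcc : B'.ncard = B.ncard := hB'.ncard_eq_ncard_of_isBase hB
  have hZB : Z = B' := Set.eq_of_subset_of_ncard_le hZB' (by omega) hB'fin
  exact hZB ▸ hB'

lemma IsSpike.base_mid {M : Matroid α} {r : ℕ} {t : α} {x y : Fin r → α} {C3 : Set (Set α)}
    (hM : IsSpike M r t x y C3) {B Z : Set α} (hB : M.IsBase B) (hBfin : B.Finite)
    (hBcard : B.ncard = r) (hZS : Z ⊆ ⋃ i, {x i, y i}) (hZcard : Z.ncard = r)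
    (j : Fin r) (hxj : x j ∈ Z) (hyj : y j ∈ Z) (hxyj : x j ≠ y j)
    (honly : ∀ k, k ≠ j → x k ∉ Z ∨ y k ∉ Z) : M.IsBase Z := by
  have hSfin : (⋃ i, {x i, y i} : Set α).Finite :=
    Set.finite_iUnion fun i => (Set.finite_singleton (y i)).insert (x i)
  have hZfin := hSfin.subset hZS
  have htZ : t ∉ Z := by
    intro h
    obtain ⟨s, ⟨i, rfl⟩, hs⟩ := hZS h
    rcases hs with h | h
    · exact hM.htx i h
    · exact hM.hty i h
  have hZE : Z ⊆ M.E := hZS.trans (by rw [hM.ground]; exact Set.subset_insert _ _)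
  have hind : M.Indep Z := by
    by_contra hdep
    obtain ⟨C, hCZ, hC⟩ := exists_isCircuitOf hZfin hZE hdep
    rw [hM.circuits] at hC
    rcases hC with ⟨i, rfl⟩ | ⟨i, j', hij, rfl⟩ | hC3m | ⟨-, hcard, -⟩
    · exact htZ (hCZ (by simp))
    · have hxi : x i ∈ Z := hCZ (by simp)
      have hyi : y i ∈ Z := hCZ (by simp)
      have hxj' : x j' ∈ Z := hCZ (by simp)
      have hyj' : y j' ∈ Z := hCZ (by simp)
      rcases eq_or_ne i j with rfl | hij2
      · rcases honly j' (Ne.symm hij) with h | h <;> [exact h hxj'; exact h hyj']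
      · rcases honly i hij2 with h | h <;> [exact h hxi; exact h hyi]
    · obtain ⟨-, hCcard, hCleg⟩ := hM.hC3 _ hC3m
      have hCE : C = Z := Set.eq_of_subset_of_ncard_le hCZ (by omega) hZfin
      have h2 : Z ∩ {x j, y j} = {x j, y j} :=
        Set.inter_eq_self_of_subset_right (by rintro z (rfl | rfl) <;> assumption)
      have := hCleg j
      rw [hCE, h2, Set.ncard_pair hxyj] at this
      omega
    · have : C.ncard ≤ Z.ncard := Set.ncard_le_ncard hCZ hZfin
      omega
  exact base_of_indep_ncard hind hB hBfin (by omega)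


/-- `SymExchSeq M P L Q` : the list `L` of pairs `(e, f)` records a sequence of feasible
symmetric exchanges transforming the pair of disjoint bases `P` into `Q`. -/
def SymExchSeq (M : Matroid α) : Set α × Set α → List (α × α) → Set α × Set α → Prop
  | P, [], Q => P = Q
  | P, (e, f) :: L, Q =>
      ∃ P' : Set α × Set α, e ∈ P.1 ∧ f ∈ P.2 ∧
        P'.1 = insert f (P.1 \ {e}) ∧ P'.2 = insert e (P.2 \ {f}) ∧
        M.IsBase P'.1 ∧ M.IsBase P'.2 ∧ SymExchSeq M P' L Q

/-- The total weight of a sequence of symmetric exchanges. -/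
def seqWeight (w : α → NNReal) (L : List (α × α)) : NNReal :=
  (L.map fun p => w p.1 + w p.2).sum

/-- The number of times an exchange sequence uses the element `a`. -/
def usesCount [DecidableEq α] (L : List (α × α)) (a : α) : ℕ :=
  (L.map Prod.fst).count a + (L.map Prod.snd).count a

/-- Case 1.4 of the spike lemma: let `(R₁, B₁)`, `(R₂, B₂)` be compatible pairs of
disjoint bases of a rank-`r` spike missing the tip `t`, with `R₁`, `R₂` non-transversal,
`{x 1, y 1} ⊆ R₁ ∩ B₂`, `{x r, y r} ⊆ B₁ ∩ R₂`, all `x i` for `2 ≤ i ≤ r - 1` having the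
same color in `P₁` and `P₂`, namely red, with `r ≥ 3` and `w (y 2) ≤ w (x 2)`. Then the
exchange sequence `(x 1, y 2), (y 1, x r), (y 2, y r)` is feasible and transforms
`(R₁, B₁)` into `(R₂, B₂)`, has length `3 ≤ r`, and has total weight at most
`w (S - t)`. -/
theorem stmt17 (M : Matroid α) (r : ℕ) (t : α) (x y : Fin r → α) (C3 : Set (Set α))
    (hM : IsSpike M r t x y C3) (w : α → NNReal)
    (i₀ i₁ iₗ : Fin r) (hi₀ : (i₀ : ℕ) = 0) (hi₁ : (i₁ : ℕ) = 1) (hiₗ : (iₗ : ℕ) = r - 1)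
    (R₁ B₁ R₂ B₂ : Set α)
    (hR₁ : M.IsBase R₁) (hB₁ : M.IsBase B₁) (hd₁ : Disjoint R₁ B₁)
    (hR₂ : M.IsBase R₂) (hB₂ : M.IsBase B₂) (hd₂ : Disjoint R₂ B₂)
    (hU₁ : R₁ ∪ B₁ = M.E \ {t}) (hU₂ : R₂ ∪ B₂ = M.E \ {t})
    (hleg₁R : ({x i₀, y i₀} : Set α) ⊆ R₁) (hlegrB : ({x iₗ, y iₗ} : Set α) ⊆ B₁)
    (hlegrR : ({x iₗ, y iₗ} : Set α) ⊆ R₂) (hleg₁B : ({x i₀, y i₀} : Set α) ⊆ B₂)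
    (hsame : ∀ i, i ≠ i₀ → i ≠ iₗ → (x i ∈ R₁ ↔ x i ∈ R₂))
    (hred : ∀ i, i ≠ i₀ → i ≠ iₗ → x i ∈ R₁)
    (hw : w (y i₁) ≤ w (x i₁)) :
    SymExchSeq M (R₁, B₁) [(x i₀, y i₁), (y i₀, x iₗ), (y i₁, y iₗ)] (R₂, B₂) ∧
      ([(x i₀, y i₁), (y i₀, x iₗ), (y i₁, y iₗ)] : List (α × α)).length = 3 ∧ 3 ≤ r ∧
      seqWeight w [(x i₀, y i₁), (y i₀, x iₗ), (y i₁, y iₗ)] ≤ ∑ᶠ a ∈ M.E \ {t}, w a := by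
  classical
  have hr3 := hM.hr
  -- index distinctness
  have h01 : i₀ ≠ i₁ := fun h => by rw [Fin.ext_iff] at h; omega
  have h0l : i₀ ≠ iₗ := fun h => by rw [Fin.ext_iff] at h; omega
  have h1l : i₁ ≠ iₗ := fun h => by rw [Fin.ext_iff] at h; omega
  have h10 := h01.symm
  have hl0 := h0l.symm
  have hl1 := h1l.symm
  -- injectivity facts
  have hxx : ∀ i j : Fin r, x i = x j ↔ i = j := by
    intro i j
    constructor
    · intro h
      have := hM.inj (a₁ := (i, true)) (a₂ := (j, true)) (by simpa using h)
      simpa using congrArg Prod.fst this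
    · rintro rfl; rfl
  have hyy : ∀ i j : Fin r, y i = y j ↔ i = j := by
    intro i j
    constructor
    · intro h
      have := hM.inj (a₁ := (i, false)) (a₂ := (j, false)) (by simpa using h)
      simpa using congrArg Prod.fst this
    · rintro rfl; rfl
  have hxy : ∀ i j : Fin r, x i ≠ y j := by
    intro i j h
    have := hM.inj (a₁ := (i, true)) (a₂ := (j, false)) (by simpa using h)
    simpa using congrArg Prod.snd this
  have hyx : ∀ i j : Fin r, y i ≠ x j := fun i j h => hxy j i h.symm
  have hxinj : Function.Injective x := fun i j h => (hxx i j).1 h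
  have hyinj : Function.Injective y := fun i j h => (hyy i j).1 h
  -- the rim S
  set S : Set α := ⋃ i, {x i, y i} with hS
  have hxS : ∀ i, x i ∈ S := fun i => Set.mem_iUnion.2 ⟨i, by simp⟩
  have hyS : ∀ i, y i ∈ S := fun i => Set.mem_iUnion.2 ⟨i, by simp⟩
  have htS : t ∉ S := by
    intro h
    obtain ⟨s, ⟨i, rfl⟩, hs⟩ := h
    rcases hs with h | h
    · exact hM.htx i h
    · exact hM.hty i h
  have hSE : M.E \ {t} = S := by
    rw [hM.ground, ← Set.insert_diff_self_of_notMem htS]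
  have hSfin : S.Finite :=
    Set.finite_iUnion fun i => (Set.finite_singleton (y i)).insert (x i)
  have hScard : S.ncard = 2 * r := by
    have hrange : S = Set.range (fun p : Fin r × Bool => if p.2 then x p.1 else y p.1) := by
      ext z
      simp only [hS, Set.mem_iUnion, Set.mem_insert_iff, Set.mem_singleton_iff, Set.mem_range]
      constructor
      · rintro ⟨i, rfl | rfl⟩
        exacts [⟨(i, true), rfl⟩, ⟨(i, false), rfl⟩]
      · rintro ⟨⟨i, b⟩, rfl⟩
        cases b
        · exact ⟨i, Or.inr rfl⟩
        · exact ⟨i, Or.inl rfl⟩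
    rw [hrange, ← Set.image_univ, Set.ncard_image_of_injective _ hM.inj, Set.ncard_univ]
    simp [Nat.card_eq_fintype_card]
    omega
  -- cardinalities of the four bases
  have hR₁fin : R₁.Finite := hSfin.subset (by rw [← hSE, ← hU₁]; exact Set.subset_union_left)
  have hB₁fin : B₁.Finite := hSfin.subset (by rw [← hSE, ← hU₁]; exact Set.subset_union_right)
  have hR₂fin : R₂.Finite := hSfin.subset (by rw [← hSE, ← hU₂]; exact Set.subset_union_left)
  have hB₂fin : B₂.Finite := hSfin.subset (by rw [← hSE, ← hU₂]; exact Set.subset_union_right)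
  have hsum₁ : R₁.ncard + B₁.ncard = 2 * r := by
    rw [← Set.ncard_union_eq hd₁ hR₁fin hB₁fin, hU₁, hSE, hScard]
  have hRB₁ : R₁.ncard = B₁.ncard := hR₁.ncard_eq_ncard_of_isBase hB₁
  have hR₁card : R₁.ncard = r := by omega
  have hB₁card : B₁.ncard = r := by omega
  have hR₂card : R₂.ncard = r := by rw [hR₂.ncard_eq_ncard_of_isBase hR₁]; exact hR₁card
  have hB₂card : B₂.ncard = r := by rw [hB₂.ncard_eq_ncard_of_isBase hR₁]; exact hR₁card
  -- middle image sets
  set X' : Set α := x '' {i : Fin r | i ≠ i₀ ∧ i ≠ iₗ} with hX'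
  set Y' : Set α := y '' {i : Fin r | i ≠ i₀ ∧ i ≠ iₗ} with hY'
  set Y'' : Set α := y '' {i : Fin r | i ≠ i₀ ∧ i ≠ iₗ ∧ i ≠ i₁} with hY''
  have hmidfin : ({i : Fin r | i ≠ i₀ ∧ i ≠ iₗ}).Finite := Set.toFinite _
  have hmid3fin : ({i : Fin r | i ≠ i₀ ∧ i ≠ iₗ ∧ i ≠ i₁}).Finite := Set.toFinite _
  have hX'fin : X'.Finite := hmidfin.image x
  have hY'fin : Y'.Finite := hmidfin.image y
  have hY''fin : Y''.Finite := hmid3fin.image y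
  have hmidcard : ({i : Fin r | i ≠ i₀ ∧ i ≠ iₗ}).ncard = r - 2 := by
    have : {i : Fin r | i ≠ i₀ ∧ i ≠ iₗ} = Set.univ \ {i₀, iₗ} := by
      ext i; simp
    rw [this, Set.ncard_diff (Set.subset_univ _), Set.ncard_univ, Set.ncard_pair h0l]
    simp
  have hmid3card : ({i : Fin r | i ≠ i₀ ∧ i ≠ iₗ ∧ i ≠ i₁}).ncard = r - 3 := by
    have : {i : Fin r | i ≠ i₀ ∧ i ≠ iₗ ∧ i ≠ i₁} = Set.univ \ {i₀, iₗ, i₁} := by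
      ext i; simp
    rw [this, Set.ncard_diff (Set.subset_univ _), Set.ncard_univ]
    have : ({i₀, iₗ, i₁} : Set (Fin r)).ncard = 3 := by
      rw [Set.ncard_insert_of_notMem (by simp [h0l, h01]) (Set.toFinite _),
        Set.ncard_pair hl1]
    rw [this]; simp
  have hX'card : X'.ncard = r - 2 := by
    rw [hX', Set.ncard_image_of_injective _ hxinj, hmidcard]
  have hY'card : Y'.ncard = r - 2 := by
    rw [hY', Set.ncard_image_of_injective _ hyinj, hmidcard]
  have hY''card : Y''.ncard = r - 3 := by
    rw [hY'', Set.ncard_image_of_injective _ hyinj, hmid3card]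
  -- membership characterizations
  have hxX' : ∀ k, x k ∈ X' ↔ (k ≠ i₀ ∧ k ≠ iₗ) := by
    intro k
    constructor
    · rintro ⟨i, hi, hxi⟩
      obtain rfl := (hxx i k).1 hxi
      exact hi
    · intro h; exact ⟨k, h, rfl⟩
  have hyX' : ∀ k, y k ∉ X' := by
    rintro k ⟨i, -, hxi⟩
    exact hxy i k hxi
  have hyY' : ∀ k, y k ∈ Y' ↔ (k ≠ i₀ ∧ k ≠ iₗ) := by
    intro k
    constructor
    · rintro ⟨i, hi, hyi⟩
      obtain rfl := (hyy i k).1 hyi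
      exact hi
    · intro h; exact ⟨k, h, rfl⟩
  have hxY' : ∀ k, x k ∉ Y' := by
    rintro k ⟨i, -, hyi⟩
    exact hyx i k hyi
  have hyY'' : ∀ k, y k ∈ Y'' ↔ (k ≠ i₀ ∧ k ≠ iₗ ∧ k ≠ i₁) := by
    intro k
    constructor
    · rintro ⟨i, hi, hyi⟩
      obtain rfl := (hyy i k).1 hyi
      exact hi
    · intro h; exact ⟨k, h, rfl⟩
  have hxY'' : ∀ k, x k ∉ Y'' := by
    rintro k ⟨i, -, hyi⟩
    exact hyx i k hyi
  have hX'S : X' ⊆ S := by rintro z ⟨i, -, rfl⟩; exact hxS i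
  have hY'S : Y' ⊆ S := by rintro z ⟨i, -, rfl⟩; exact hyS i
  have hY''S : Y'' ⊆ S := by rintro z ⟨i, -, rfl⟩; exact hyS i
  have hY'eq : Y' = insert (y i₁) Y'' := by
    rw [hY', hY'']
    rw [show {i : Fin r | i ≠ i₀ ∧ i ≠ iₗ} = insert i₁ {i : Fin r | i ≠ i₀ ∧ i ≠ iₗ ∧ i ≠ i₁}
      by ext i; by_cases h : i = i₁ <;> simp [h, h10, h1l]]
    rw [Set.image_insert_eq]
  -- identify the four bases
  have hR₁eq : R₁ = insert (x i₀) (insert (y i₀) X') := by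
    refine (Set.eq_of_subset_of_ncard_le ?_ ?_ hR₁fin).symm
    · rintro z (rfl | rfl | ⟨i, hi, rfl⟩)
      · exact hleg₁R (by simp)
      · exact hleg₁R (by simp)
      · exact hred i hi.1 hi.2
    · rw [hR₁card, Set.ncard_insert_of_notMem (by simp [hxy, hxX']) (hX'fin.insert _),
        Set.ncard_insert_of_notMem (hyX' _) hX'fin, hX'card]
      omega
  have hyB₁ : ∀ i, i ≠ i₀ → i ≠ iₗ → y i ∈ B₁ := by
    intro i hi0 hil
    have hmem : y i ∈ R₁ ∪ B₁ := by rw [hU₁, hSE]; exact hyS i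
    rcases hmem with h | h
    · exfalso
      rw [hR₁eq] at h
      rcases h with h | h | h
      · exact hyx i i₀ h
      · exact hi0 ((hyy i i₀).1 h)
      · exact hyX' i h
    · exact h
  have hB₁eq : B₁ = insert (x iₗ) (insert (y iₗ) Y') := by
    refine (Set.eq_of_subset_of_ncard_le ?_ ?_ hB₁fin).symm
    · rintro z (rfl | rfl | ⟨i, hi, rfl⟩)
      · exact hlegrB (by simp)
      · exact hlegrB (by simp)
      · exact hyB₁ i hi.1 hi.2
    · rw [hB₁card, Set.ncard_insert_of_notMem (by simp [hxy, hxY']) (hY'fin.insert _),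
        Set.ncard_insert_of_notMem (by simp [hyy, hyY', hl0]) hY'fin, hY'card]
      omega
  have hR₂eq : R₂ = insert (x iₗ) (insert (y iₗ) X') := by
    refine (Set.eq_of_subset_of_ncard_le ?_ ?_ hR₂fin).symm
    · rintro z (rfl | rfl | ⟨i, hi, rfl⟩)
      · exact hlegrR (by simp)
      · exact hlegrR (by simp)
      · exact (hsame i hi.1 hi.2).1 (hred i hi.1 hi.2)
    · rw [hR₂card, Set.ncard_insert_of_notMem (by simp [hxy, hxX']) (hX'fin.insert _),
        Set.ncard_insert_of_notMem (hyX' _) hX'fin, hX'card]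
      omega
  have hyB₂ : ∀ i, i ≠ i₀ → i ≠ iₗ → y i ∈ B₂ := by
    intro i hi0 hil
    have hmem : y i ∈ R₂ ∪ B₂ := by rw [hU₂, hSE]; exact hyS i
    rcases hmem with h | h
    · exfalso
      rw [hR₂eq] at h
      rcases h with h | h | h
      · exact hyx i iₗ h
      · exact hil ((hyy i iₗ).1 h)
      · exact hyX' i h
    · exact h
  have hB₂eq : B₂ = insert (x i₀) (insert (y i₀) Y') := by
    refine (Set.eq_of_subset_of_ncard_le ?_ ?_ hB₂fin).symm
    · rintro z (rfl | rfl | ⟨i, hi, rfl⟩)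
      · exact hleg₁B (by simp)
      · exact hleg₁B (by simp)
      · exact hyB₂ i hi.1 hi.2
    · rw [hB₂card, Set.ncard_insert_of_notMem (by simp [hxy, hxY']) (hY'fin.insert _),
        Set.ncard_insert_of_notMem (by simp [hyy, hyY']) hY'fin, hY'card]
      omega
  -- intermediate pairs
  set Z₁ : Set α := insert (y i₀) (insert (y i₁) X') with hZ₁
  set W₁ : Set α := insert (x i₀) (insert (x iₗ) (insert (y iₗ) Y'')) with hW₁
  set Z₂ : Set α := insert (y i₁) (insert (x iₗ) X') with hZ₂
  set W₂ : Set α := insert (x i₀) (insert (y i₀) (insert (y iₗ) Y'')) with hW₂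
  have eq1 : insert (y i₁) (R₁ \ {x i₀}) = Z₁ := by
    rw [hR₁eq, Set.insert_diff_self_of_notMem (by simp [hxy, hxX']), Set.insert_comm, hZ₁]
  have eq2 : insert (x i₀) (B₁ \ {y i₁}) = W₁ := by
    rw [hB₁eq, hY'eq, Set.insert_comm (y iₗ) (y i₁), Set.insert_comm (x iₗ) (y i₁),
      Set.insert_diff_self_of_notMem (by simp [hyx, hyy, hyY'', h1l]), hW₁]
  have eq3 : insert (x iₗ) (Z₁ \ {y i₀}) = Z₂ := by
    rw [hZ₁, Set.insert_diff_self_of_notMem (by simp [hyy, hyX', h01]), Set.insert_comm, hZ₂]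
  have eq4 : insert (y i₀) (W₁ \ {x iₗ}) = W₂ := by
    rw [hW₁, Set.insert_comm (x i₀) (x iₗ),
      Set.insert_diff_self_of_notMem (by simp [hxx, hxy, hxY'', hl0]), Set.insert_comm, hW₂]
  have eq5 : insert (y iₗ) (Z₂ \ {y i₁}) = R₂ := by
    rw [hZ₂, Set.insert_diff_self_of_notMem (by simp [hyx, hyX']), Set.insert_comm, ← hR₂eq]
  have eq6 : insert (y i₁) (W₂ \ {y iₗ}) = B₂ := by
    rw [hW₂, Set.insert_comm (y i₀) (y iₗ), Set.insert_comm (x i₀) (y iₗ),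
      Set.insert_diff_self_of_notMem (by simp [hyx, hyy, hyY'', hl0]),
      hB₂eq, hY'eq, Set.insert_comm (y i₁) (x i₀), Set.insert_comm (y i₁) (y i₀)]
  -- intermediate bases
  have hZ₁base : M.IsBase Z₁ := by
    refine hM.base_mid hR₁ hR₁fin hR₁card ?_ ?_ i₁ ?_ ?_ (hxy _ _) ?_
    · rintro z (rfl | rfl | hz)
      · exact hyS i₀
      · exact hyS i₁
      · exact hX'S hz
    · rw [hZ₁, Set.ncard_insert_of_notMem (by simp [hyy, hyX', h01]) (hX'fin.insert _),
        Set.ncard_insert_of_notMem (hyX' _) hX'fin, hX'card]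
      omega
    · simp [hZ₁, hxy, hxX', h10, h1l]
    · simp [hZ₁]
    · intro k hk
      by_cases hk0 : k = i₀
      · subst hk0; left; simp [hZ₁, hxy, hxX']
      · right; simp [hZ₁, hyy, hyX', hk, hk0]
  have hW₁base : M.IsBase W₁ := by
    refine hM.base_mid hR₁ hR₁fin hR₁card ?_ ?_ iₗ ?_ ?_ (hxy _ _) ?_
    · rintro z (rfl | rfl | rfl | hz)
      · exact hxS i₀
      · exact hxS iₗ
      · exact hyS iₗ
      · exact hY''S hz
    · rw [hW₁,
        Set.ncard_insert_of_notMem (by simp [hxx, hxy, h0l, hxY'']) ((hY''fin.insert _).insert _),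
        Set.ncard_insert_of_notMem (by simp [hxy, hxY'']) (hY''fin.insert _),
        Set.ncard_insert_of_notMem (by simp [hyY'']) hY''fin, hY''card]
      omega
    · simp [hW₁]
    · simp [hW₁]
    · intro k hk
      by_cases hk0 : k = i₀
      · subst hk0; right; simp [hW₁, hyx, hyy, h0l, hyY'']
      · left; simp [hW₁, hxx, hxy, hk, hk0, hxY'']
  have hZ₂base : M.IsBase Z₂ := by
    refine hM.base_mid hR₁ hR₁fin hR₁card ?_ ?_ i₁ ?_ ?_ (hxy _ _) ?_
    · rintro z (rfl | rfl | hz)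
      · exact hyS i₁
      · exact hxS iₗ
      · exact hX'S hz
    · rw [hZ₂, Set.ncard_insert_of_notMem (by simp [hyx, hyX']) (hX'fin.insert _),
        Set.ncard_insert_of_notMem (by simp [hxX']) hX'fin, hX'card]
      omega
    · simp [hZ₂, hxy, hxx, h1l, hxX', h10]
    · simp [hZ₂]
    · intro k hk
      right; simp [hZ₂, hyy, hyx, hyX', hk]
  have hW₂base : M.IsBase W₂ := by
    refine hM.base_mid hR₁ hR₁fin hR₁card ?_ ?_ i₀ ?_ ?_ (hxy _ _) ?_
    · rintro z (rfl | rfl | rfl | hz)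
      · exact hxS i₀
      · exact hyS i₀
      · exact hyS iₗ
      · exact hY''S hz
    · rw [hW₂,
        Set.ncard_insert_of_notMem (by simp [hxy, hxY'']) ((hY''fin.insert _).insert _),
        Set.ncard_insert_of_notMem (by simp [hyy, h0l, hyY'']) (hY''fin.insert _),
        Set.ncard_insert_of_notMem (by simp [hyY'']) hY''fin, hY''card]
      omega
    · simp [hW₂]
    · simp [hW₂]
    · intro k hk
      left; simp [hW₂, hxx, hxy, hk, hxY'']
  refine ⟨?_, rfl, hr3, ?_⟩
  · exact ⟨(Z₁, W₁), hleg₁R (by simp), by simp [hB₁eq, hyY', h10, h1l],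
      eq1.symm, eq2.symm, hZ₁base, hW₁base,
      (Z₂, W₂), by simp [hZ₁], by simp [hW₁],
      eq3.symm, eq4.symm, hZ₂base, hW₂base,
      (R₂, B₂), by simp [hZ₂], by simp [hW₂],
      eq5.symm, eq6.symm, hR₂, hB₂, rfl⟩
  · rw [hSE, ← hSfin.coe_toFinset, finsum_mem_coe_finset]
    set T : Finset α := {x i₀, y i₀, x i₁, y i₁, x iₗ, y iₗ} with hT
    have hTsub : T ⊆ hSfin.toFinset := by
      intro z hz
      simp only [hT, Finset.mem_insert, Finset.mem_singleton] at hz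
      rw [Set.Finite.mem_toFinset]
      rcases hz with rfl | rfl | rfl | rfl | rfl | rfl
      exacts [hxS _, hyS _, hxS _, hyS _, hxS _, hyS _]
    refine le_trans ?_ (Finset.sum_le_sum_of_subset hTsub)
    have hTsum : ∑ a ∈ T, w a
        = w (x i₀) + (w (y i₀) + (w (x i₁) + (w (y i₁) + (w (x iₗ) + w (y iₗ))))) := by
      rw [hT, Finset.sum_insert (by simp [hxy, hxx, h01, h0l]),
        Finset.sum_insert (by simp [hyx, hyy, h01, h0l]),
        Finset.sum_insert (by simp [hxy, hxx, h1l]),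
        Finset.sum_insert (by simp [hyx, hyy, h1l]),
        Finset.sum_pair (hxy iₗ iₗ)]
    rw [hTsum]
    simp only [seqWeight, List.map_cons, List.map_nil, List.sum_cons, List.sum_nil, add_zero]
    rw [← NNReal.coe_le_coe]
    push_cast
    have hw' : (w (y i₁) : ℝ) ≤ (w (x i₁) : ℝ) := NNReal.coe_le_coe.2 hw
    linarith
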